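/- Fix a real p with 0 < p ≤ 1 and q = 1 − p, and let n ≥ 2 be an integer. Then Σ_{w ∈ (ℤ⁺)ⁿ} P(w)·dsv(w) = q·(p/(1−q³) − 1/(1+q)²)·(n−2), where the sum over all words w of length n converges absolutely. In other words, the expected value of the sum of depths of symmetric valleys in a sample of n geometric random variables is q(p/(1−q³) − 1/(1+q)²)(n−2). -/

import Mathlib

/-- The indices (0-based) of symmetric valleys of a list of naturals:
`i` is a symmetric valley if `L i > L (i+1)` and `L i = L (i+2)`. -/
def symValleyIdx (L : List ℕ) : Finset ℕ :=
  (Finset.range L.length).filter (fun i =>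
    i + 2 < L.length ∧ L.getD i 0 > L.getD (i+1) 0 ∧ L.getD i 0 = L.getD (i+2) 0)

/-- `dsv w`: the sum of the depths of the symmetric valleys of `w`. -/
def dsvL (L : List ℕ) : ℕ := ∑ i ∈ symValleyIdx L, (L.getD i 0 - L.getD (i+1) 0)

/-- The probability of the word `w` of length `n` with i.i.d. geometric letters:
`P(w) = ∏_{i} p·q^{wᵢ−1}`. -/
def wordP (p q : ℝ) {n : ℕ} (w : Fin n → ℕ+) : ℝ :=
  ∏ i : Fin n, p * q ^ ((w i : ℕ) - 1)

open scoped ENNReal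

noncomputable def gN : ℕ → ℕ → ℕ → ℝ≥0∞ := fun x y z =>
  if y < x ∧ x = z then ((x - y : ℕ) : ℝ≥0∞) else 0


lemma dsv_expand (L : List ℕ) :
    ((dsvL L : ℕ) : ℝ≥0∞) = ∑ i ∈ Finset.range (L.length - 2),
      gN (L.getD i 0) (L.getD (i+1) 0) (L.getD (i+2) 0) := by
  rw [dsvL, symValleyIdx, Finset.sum_filter, Nat.cast_sum]
  push_cast
  rw [← Finset.sum_subset (Finset.range_subset_range.mpr (Nat.sub_le L.length 2))
    (fun i _ hi => ?_)]
  · refine Finset.sum_congr rfl fun i hi => ?_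
    have h2 : i + 2 < L.length := by
      have := Finset.mem_range.mp hi; omega
    rw [gN]
    by_cases h : L.getD (i+1) 0 < L.getD i 0 ∧ L.getD i 0 = L.getD (i+2) 0
    · rw [if_pos ⟨h2, h.1, h.2⟩, if_pos h, ENNReal.natCast_sub]
    · rw [if_neg, if_neg h]
      rintro ⟨-, h1', h2'⟩
      exact h ⟨h1', h2'⟩
  · have h2 : ¬ (i + 2 < L.length) := by
      have := Finset.mem_range.not.mp hi; omega
    rw [if_neg (fun hc => h2 hc.1)]

lemma getD_ofFn {n : ℕ} (w : Fin n → ℕ+) (i : ℕ) (h : i < n) :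
    (List.ofFn fun j => ((w j : ℕ))).getD i 0 = (w ⟨i, h⟩ : ℕ) := by
  rw [List.getD_eq_getElem _ _ (by simpa using h)]
  simp

lemma tsum_pi_fin (f : ℕ+ → ℝ≥0∞) : ∀ m, ∑' v : Fin m → ℕ+, (∏ j, f (v j)) = (∑' x, f x) ^ m
  | 0 => by
      rw [tsum_eq_single (fun i => i.elim0) (fun b hb => absurd (funext fun i => i.elim0) hb)]
      simp
  | (m+1) => by
      rw [← (Fin.consEquiv (fun _ : Fin (m+1) => ℕ+)).tsum_eq]
      have : ∀ (x : ℕ+ × (Fin m → ℕ+)),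
          (∏ j, f ((Fin.consEquiv (fun _ : Fin (m+1) => ℕ+)) x j))
            = f x.1 * ∏ j, f (x.2 j) := by
        intro x
        rw [Fin.prod_univ_succ]
        simp [Fin.consEquiv]
      rw [tsum_congr this, ENNReal.tsum_prod']
      simp_rw [ENNReal.tsum_mul_left, ENNReal.tsum_mul_right]
      rw [tsum_pi_fin f m, pow_succ]
      ring


lemma tsum_pi_fintype {κ : Type*} [Fintype κ] (f : ℕ+ → ℝ≥0∞) :
    ∑' v : κ → ℕ+, (∏ j, f (v j)) = (∑' x, f x) ^ (Fintype.card κ) := by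
  rw [← (Equiv.arrowCongr (Fintype.equivFin κ).symm (Equiv.refl ℕ+)).tsum_eq,
    ← tsum_pi_fin f (Fintype.card κ)]
  refine tsum_congr fun a => ?_
  exact Equiv.prod_comp (Fintype.equivFin κ) (fun i => f (a i))

lemma marginal3 {n : ℕ} (f : ℕ+ → ℝ≥0∞) (hf : ∑' x, f x = 1) (a b c : Fin n)
    (hab : a ≠ b) (hac : a ≠ c) (hbc : b ≠ c) (g : ℕ+ → ℕ+ → ℕ+ → ℝ≥0∞) :
    ∑' w : Fin n → ℕ+, (∏ j, f (w j)) * g (w a) (w b) (w c)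
      = ∑' x : ℕ+, ∑' y : ℕ+, ∑' z : ℕ+, f x * f y * f z * g x y z := by
  classical
  set P : Fin n → Prop := fun j => j = a ∨ j = b ∨ j = c with hP
  have hPa : P a := Or.inl rfl
  have hPb : P b := Or.inr (Or.inl rfl)
  have hPc : P c := Or.inr (Or.inr rfl)
  set A : {x // P x} := ⟨a, hPa⟩ with hA
  set B : {x // P x} := ⟨b, hPb⟩ with hB
  set C : {x // P x} := ⟨c, hPc⟩ with hC
  rw [← (Equiv.piEquivPiSubtypeProd P (fun _ => ℕ+)).symm.tsum_eq]
  have key : ∀ (u : {x // P x} → ℕ+) (v : {x // ¬ P x} → ℕ+),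
      (∏ j, f (((Equiv.piEquivPiSubtypeProd P (fun _ => ℕ+)).symm (u, v)) j)) *
        g (((Equiv.piEquivPiSubtypeProd P (fun _ => ℕ+)).symm (u, v)) a)
          (((Equiv.piEquivPiSubtypeProd P (fun _ => ℕ+)).symm (u, v)) b)
          (((Equiv.piEquivPiSubtypeProd P (fun _ => ℕ+)).symm (u, v)) c)
      = ((∏ j, f (u j)) * g (u A) (u B) (u C)) * (∏ j, f (v j)) := by
    intro u v
    have hw : ∀ j, ((Equiv.piEquivPiSubtypeProd P (fun _ => ℕ+)).symm (u, v)) j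
        = if h : P j then u ⟨j, h⟩ else v ⟨j, h⟩ := fun j => rfl
    have h1 : (∏ j, f (((Equiv.piEquivPiSubtypeProd P (fun _ => ℕ+)).symm (u, v)) j))
        = (∏ j, f (u j)) * (∏ j, f (v j)) := by
      rw [← Fintype.prod_subtype_mul_prod_subtype P
        (fun j => f (((Equiv.piEquivPiSubtypeProd P (fun _ => ℕ+)).symm (u, v)) j))]
      congr 1
      · exact Finset.prod_congr rfl fun j _ => by rw [hw j.1, dif_pos j.2]
      · exact Finset.prod_congr rfl fun j _ => by rw [hw j.1, dif_neg j.2]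
    rw [h1, hw a, hw b, hw c, dif_pos hPa, dif_pos hPb, dif_pos hPc]
    ring
  rw [tsum_congr (fun uv : ({x // P x} → ℕ+) × ({x // ¬ P x} → ℕ+) => key uv.1 uv.2)]
  rw [ENNReal.tsum_prod']
  simp_rw [ENNReal.tsum_mul_left, tsum_pi_fintype f, hf, one_pow, mul_one]
  have hABne : A ≠ B := by simp [hA, hB, Subtype.ext_iff, hab]
  have hACne : A ≠ C := by simp [hA, hC, Subtype.ext_iff, hac]
  have hBCne : B ≠ C := by simp [hB, hC, Subtype.ext_iff, hbc]
  have huniv : (Finset.univ : Finset {x // P x}) = {A, B, C} := by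
    ext j
    simp only [Finset.mem_univ, Finset.mem_insert, Finset.mem_singleton, true_iff]
    have hj := j.2
    simp only [hP] at hj
    rcases hj with h | h | h
    · exact Or.inl (by rw [hA]; exact Subtype.ext h)
    · exact Or.inr (Or.inl (by rw [hB]; exact Subtype.ext h))
    · exact Or.inr (Or.inr (by rw [hC]; exact Subtype.ext h))
  let ψ : ℕ+ × ℕ+ × ℕ+ ≃ ({x // P x} → ℕ+) :=
  { toFun := fun t j => if j = A then t.1 else if j = B then t.2.1 else t.2.2
    invFun := fun u => (u A, u B, u C)
    left_inv := fun t => by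
      simp [hABne.symm, hACne.symm, hBCne.symm, hABne, hACne, hBCne]
    right_inv := fun u => by
      funext j
      have : j = A ∨ j = B ∨ j = C := by
        have := huniv ▸ Finset.mem_univ j
        simpa using this
      rcases this with h | h | h <;> simp [h, hABne.symm, hACne.symm, hBCne.symm] }
  rw [← ψ.tsum_eq]
  have key2 : ∀ t : ℕ+ × ℕ+ × ℕ+,
      (∏ j, f (ψ t j)) * g (ψ t A) (ψ t B) (ψ t C)
        = f t.1 * f t.2.1 * f t.2.2 * g t.1 t.2.1 t.2.2 := by
    intro t
    have h1 : ψ t A = t.1 := by simp [ψ]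
    have h2 : ψ t B = t.2.1 := by simp [ψ, hABne.symm]
    have h3 : ψ t C = t.2.2 := by simp [ψ, hACne.symm, hBCne.symm]
    have hprod : (∏ j, f (ψ t j)) = f t.1 * f t.2.1 * f t.2.2 := by
      rw [huniv, Finset.prod_insert (by simp [hABne, hACne]),
        Finset.prod_insert (by simp [hBCne]), Finset.prod_singleton, h1, h2, h3, mul_assoc]
    rw [hprod, h1, h2, h3, mul_assoc, mul_assoc]
  rw [tsum_congr key2, ENNReal.tsum_prod']
  refine tsum_congr fun x => ?_
  rw [ENNReal.tsum_prod']

noncomputable def fq (q : ℝ) : ℕ+ → ℝ≥0∞ := fun x => ENNReal.ofReal ((1 - q) * q ^ ((x : ℕ) - 1))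


lemma tsum_fq {q : ℝ} (h0 : 0 ≤ q) (h1 : q < 1) : ∑' x : ℕ+, fq q x = 1 := by
  rw [← Equiv.pnatEquivNat.symm.tsum_eq]
  have hterm : ∀ m : ℕ, fq q (Equiv.pnatEquivNat.symm m) = ENNReal.ofReal ((1 - q) * q ^ m) := by
    intro m
    simp [fq, Equiv.pnatEquivNat, Nat.succPNat]
  rw [tsum_congr hterm]
  have hsummable : Summable (fun m : ℕ => (1 - q) * q ^ m) :=
    (summable_geometric_of_lt_one h0 h1).mul_left _
  rw [← ENNReal.ofReal_tsum_of_nonneg (fun m => mul_nonneg (by linarith) (pow_nonneg h0 m)) hsummable]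
  rw [tsum_mul_left, tsum_geometric_of_lt_one h0 h1]
  rw [mul_inv_cancel₀ (by linarith), ENNReal.ofReal_one]

noncomputable def gE : ℕ+ → ℕ+ → ℕ+ → ℝ≥0∞ := fun x y z => gN x y z

lemma hz_sum {q : ℝ} (x y : ℕ+) :
    ∑' z : ℕ+, fq q x * fq q y * fq q z * gE x y z
      = if (y : ℕ) < (x : ℕ) then
          fq q x * fq q y * fq q x * (((x : ℕ) - (y : ℕ) : ℕ) : ℝ≥0∞) else 0 := by
  by_cases h : (y : ℕ) < (x : ℕ)
  · have key : ∀ z : ℕ+, fq q x * fq q y * fq q z * gE x y z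
        = if z = x then fq q x * fq q y * fq q x * (((x : ℕ) - (y : ℕ) : ℕ) : ℝ≥0∞) else 0 := by
      intro z
      by_cases hzx : z = x
      · subst hzx; simp [gE, gN, h]
      · have hne : (x : ℕ) ≠ (z : ℕ) := fun hc => hzx (PNat.coe_inj.mp hc.symm)
        simp [gE, gN, h, hne, hzx]
    rw [tsum_congr key, if_pos h]
    exact tsum_ite_eq x (fun _ => fq q x * fq q y * fq q x * (((x : ℕ) - (y : ℕ) : ℕ) : ℝ≥0∞))
  · have key : ∀ z : ℕ+, fq q x * fq q y * fq q z * gE x y z = 0 := by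
      intro z; simp [gE, gN, h]
    rw [tsum_congr key, tsum_zero, if_neg h]

lemma geom_sq {r : ℝ} (h0 : 0 ≤ r) (h1 : r < 1) :
    HasSum (fun m : ℕ => ((m : ℝ) + 1) * r ^ m) (((1 - r) ^ 2)⁻¹) := by
  have hr : ‖r‖ < 1 := by rw [Real.norm_eq_abs, abs_of_nonneg h0]; exact h1
  have h2 := hasSum_coe_mul_geometric_of_norm_lt_one (𝕜 := ℝ) hr
  have h3 := hasSum_geometric_of_norm_lt_one (ξ := r) hr
  have := h2.add h3
  simp_rw [← add_one_mul] at this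
  convert this using 1
  · rfl
  have hne : (1 : ℝ) - r ≠ 0 := by linarith
  field_simp
  ring

lemma hx_sum {q : ℝ} (h0 : 0 ≤ q) (h1 : q < 1) (y : ℕ+) :
    ∑' x : ℕ+, (if (y : ℕ) < (x : ℕ) then
        fq q x * fq q y * fq q x * (((x : ℕ) - (y : ℕ) : ℕ) : ℝ≥0∞) else 0)
      = ENNReal.ofReal ((1-q)^3 * q^(2*(y:ℕ)) * q^((y:ℕ)-1) * ((1-q^2)^2)⁻¹) := by
  set Y := (y : ℕ) with hY
  have hq2 : (0:ℝ) ≤ q^2 := sq_nonneg q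
  have hq21 : q^2 < 1 := by nlinarith
  -- substitution x = y + d
  have hginj : Function.Injective (fun d : ℕ+ => y + d) := by
    intro d e h
    have : (y:ℕ) + (d:ℕ) = (y:ℕ) + (e:ℕ) := by
      have := congrArg (fun t : ℕ+ => (t : ℕ)) h
      simpa [PNat.add_coe] using this
    exact PNat.coe_inj.mp (Nat.add_left_cancel this)
  have hsupp : Function.support (fun x : ℕ+ => if (y : ℕ) < (x : ℕ) then
        fq q x * fq q y * fq q x * (((x : ℕ) - (y : ℕ) : ℕ) : ℝ≥0∞) else 0)
      ⊆ Set.range (fun d : ℕ+ => y + d) := by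
    intro x hx
    by_cases h : (y : ℕ) < (x : ℕ)
    · exact ⟨x - y, PNat.add_sub_of_lt ((PNat.coe_lt_coe y x).mp h)⟩
    · simp only [Function.mem_support, ne_eq, ite_eq_right_iff, not_forall] at hx
      exact absurd hx.1 h
  rw [← hginj.tsum_eq hsupp]
  have hterm : ∀ d : ℕ+, (if (y : ℕ) < ((y + d : ℕ+) : ℕ) then
        fq q (y+d) * fq q y * fq q (y+d) * ((((y+d:ℕ+) : ℕ) - (y : ℕ) : ℕ) : ℝ≥0∞) else 0)
      = fq q (y+d) * fq q y * fq q (y+d) * ((d : ℕ) : ℝ≥0∞) := by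
    intro d
    have hlt : (y : ℕ) < ((y + d : ℕ+) : ℕ) := by
      rw [PNat.add_coe]; exact Nat.lt_add_of_pos_right d.pos
    rw [if_pos hlt]
    congr 2
    rw [PNat.add_coe]
    omega
  rw [tsum_congr (fun d => hterm d)]
  -- reindex over ℕ
  rw [← Equiv.pnatEquivNat.symm.tsum_eq]
  have hterm2 : ∀ m : ℕ, fq q (y + Equiv.pnatEquivNat.symm m) * fq q y *
        fq q (y + Equiv.pnatEquivNat.symm m) * (((Equiv.pnatEquivNat.symm m : ℕ+) : ℕ) : ℝ≥0∞)
      = ENNReal.ofReal ((((1-q) * q^(Y+m)) * ((1-q) * q^(Y-1))) *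
          (((1-q) * q^(Y+m)) * ((m:ℝ)+1))) := by
    intro m
    have hco : ((y + Equiv.pnatEquivNat.symm m : ℕ+) : ℕ) = Y + (m+1) := by
      rw [PNat.add_coe]; simp [Equiv.pnatEquivNat, Nat.succPNat, hY]
    have hexp : ((y + Equiv.pnatEquivNat.symm m : ℕ+) : ℕ) - 1 = Y + m := by
      rw [hco]; omega
    have hnn : (0:ℝ) ≤ (1-q) * q ^ (Y + m) := mul_nonneg (by linarith) (pow_nonneg h0 _)
    have hnn2 : (0:ℝ) ≤ (1-q) * q ^ (Y - 1) := mul_nonneg (by linarith) (pow_nonneg h0 _)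
    have hfq1 : fq q (y + Equiv.pnatEquivNat.symm m) = ENNReal.ofReal ((1-q) * q^(Y+m)) := by
      rw [fq, hexp]
    have hfq2 : fq q y = ENNReal.ofReal ((1-q) * q^(Y-1)) := rfl
    have hcast : (((Equiv.pnatEquivNat.symm m : ℕ+) : ℕ) : ℝ≥0∞) = ENNReal.ofReal ((m:ℝ)+1) := by
      have : ((Equiv.pnatEquivNat.symm m : ℕ+) : ℕ) = m + 1 := by
        simp [Equiv.pnatEquivNat, Nat.succPNat]
      rw [this, ← ENNReal.ofReal_natCast]
      push_cast
      ring_nf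
    rw [hfq1, hfq2, hcast, ← ENNReal.ofReal_mul hnn, ← ENNReal.ofReal_mul (mul_nonneg hnn hnn2),
      ← ENNReal.ofReal_mul (mul_nonneg (mul_nonneg hnn hnn2) hnn)]
    congr 1
    ring
  rw [tsum_congr hterm2]
  -- evaluate the real series
  set C : ℝ := (1-q)^3 * q^(2*Y) * q^(Y-1) with hC
  have hueq : ∀ m : ℕ, (((1-q) * q^(Y+m)) * ((1-q) * q^(Y-1))) *
      (((1-q) * q^(Y+m)) * ((m:ℝ)+1)) = C * (((m:ℝ)+1) * (q^2)^m) := by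
    intro m
    have h2m : (q^2)^m = q^m * q^m := by
      rw [← pow_mul, two_mul, pow_add]
    rw [hC, pow_add, two_mul, pow_add, h2m]
    ring
  simp_rw [hueq]
  have hsum : HasSum (fun m : ℕ => C * (((m:ℝ)+1) * (q^2)^m)) (C * ((1-q^2)^2)⁻¹) :=
    (geom_sq hq2 hq21).mul_left C
  have hCnn : 0 ≤ C := by
    rw [hC]
    exact mul_nonneg (mul_nonneg (pow_nonneg (by linarith) 3) (pow_nonneg h0 _)) (pow_nonneg h0 _)
  rw [← ENNReal.ofReal_tsum_of_nonneg
      (fun m => mul_nonneg hCnn (mul_nonneg (by positivity) (pow_nonneg hq2 m)))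
      hsum.summable, hsum.tsum_eq]

lemma triple_eval {q : ℝ} (h0 : 0 ≤ q) (h1 : q < 1) :
    ∑' x : ℕ+, ∑' y : ℕ+, ∑' z : ℕ+, fq q x * fq q y * fq q z * gE x y z
      = ENNReal.ofReal ((1-q)^3 * q^2 * ((1-q^2)^2)⁻¹ * (1-q^3)⁻¹) := by
  have hq3 : (0:ℝ) ≤ q^3 := pow_nonneg h0 3
  have hq31 : q^3 < 1 := pow_lt_one₀ h0 h1 (by norm_num)
  rw [tsum_congr fun x => tsum_congr fun y => hz_sum (q := q) x y]
  rw [ENNReal.tsum_comm]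
  rw [tsum_congr fun y => hx_sum h0 h1 y]
  rw [← Equiv.pnatEquivNat.symm.tsum_eq]
  set D : ℝ := (1-q)^3 * q^2 * ((1-q^2)^2)⁻¹ with hD
  have hDnn : 0 ≤ D := by
    rw [hD]
    have : (0:ℝ) ≤ ((1-q^2)^2)⁻¹ := by positivity
    exact mul_nonneg (mul_nonneg (pow_nonneg (by linarith) 3) (by positivity)) this
  have hterm : ∀ m : ℕ, ENNReal.ofReal ((1-q)^3 * q^(2*((Equiv.pnatEquivNat.symm m : ℕ+) : ℕ))
        * q^(((Equiv.pnatEquivNat.symm m : ℕ+) : ℕ) - 1) * ((1-q^2)^2)⁻¹)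
      = ENNReal.ofReal (D * (q^3)^m) := by
    intro m
    have hco : ((Equiv.pnatEquivNat.symm m : ℕ+) : ℕ) = m + 1 := by
      simp [Equiv.pnatEquivNat, Nat.succPNat]
    rw [hco]
    congr 1
    have e1 : 2 * (m + 1) = 2 + 2*m := by omega
    have e2 : m + 1 - 1 = m := by omega
    have e3 : (q^3)^m = q^m * q^m * q^m := by
      rw [← pow_mul]
      have : 3 * m = m + m + m := by omega
      rw [this, pow_add, pow_add]
    rw [hD, e1, e2, pow_add, e3]
    ring
  rw [tsum_congr hterm]
  have hsum : HasSum (fun m : ℕ => D * (q^3)^m) (D * (1-q^3)⁻¹) :=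
    (hasSum_geometric_of_lt_one hq3 hq31).mul_left D
  rw [← ENNReal.ofReal_tsum_of_nonneg
      (fun m => mul_nonneg hDnn (pow_nonneg hq3 m)) hsum.summable, hsum.tsum_eq]

/-- For `0 < p ≤ 1`, `q = 1 − p`, and `n ≥ 2`, the expected value of the sum of depths
of symmetric valleys in a sample of `n` geometric random variables is
`q(p/(1−q³) − 1/(1+q)²)(n−2)`; the sum over all words converges (absolutely, as all
terms are nonnegative). -/
theorem expected_depths_symmetric_valleys (p q : ℝ) (hp : 0 < p) (hp1 : p ≤ 1)
    (hq : q = 1 - p) (n : ℕ) (hn : 2 ≤ n) :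
    Summable (fun w : Fin n → ℕ+ =>
      wordP p q w * (dsvL (List.ofFn fun i => (w i : ℕ)) : ℝ)) ∧
    ∑' w : Fin n → ℕ+, wordP p q w * (dsvL (List.ofFn fun i => (w i : ℕ)) : ℝ)
      = q * (p / (1 - q ^ 3) - 1 / (1 + q) ^ 2) * ((n : ℝ) - 2) := by
  classical
  have hq0 : 0 ≤ q := by linarith
  have hq1 : q < 1 := by linarith
  have hpq : p = 1 - q := by linarith
  set F : (Fin n → ℕ+) → ℝ≥0∞ := fun w => (∏ j, fq q (w j)) *
    ((dsvL (List.ofFn fun i => ((w i : ℕ))) : ℕ) : ℝ≥0∞) with hF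
  have hword_nonneg : ∀ w : Fin n → ℕ+, 0 ≤ wordP p q w := fun w =>
    Finset.prod_nonneg fun j _ => mul_nonneg hp.le (pow_nonneg hq0 _)
  have hA_nonneg : ∀ w : Fin n → ℕ+,
      0 ≤ wordP p q w * (dsvL (List.ofFn fun i => (w i : ℕ)) : ℝ) := fun w =>
    mul_nonneg (hword_nonneg w) (Nat.cast_nonneg _)
  have hofReal : ∀ w : Fin n → ℕ+,
      ENNReal.ofReal (wordP p q w * (dsvL (List.ofFn fun i => (w i : ℕ)) : ℝ)) = F w := by
    intro w
    rw [ENNReal.ofReal_mul (hword_nonneg w), hF]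
    congr 1
    · rw [wordP, ENNReal.ofReal_prod_of_nonneg
        (fun j _ => mul_nonneg hp.le (pow_nonneg hq0 _))]
      exact Finset.prod_congr rfl fun j _ => by rw [fq, hpq]
    · exact ENNReal.ofReal_natCast _
  have hlen : ∀ w : Fin n → ℕ+, (List.ofFn fun i => ((w i : ℕ))).length = n := by
    intro w; simp
  have hsumF : ∑' w, F w = ((n - 2 : ℕ) : ℝ≥0∞) *
      ENNReal.ofReal ((1-q)^3 * q^2 * ((1-q^2)^2)⁻¹ * (1-q^3)⁻¹) := by
    have hstep1 : ∀ w : Fin n → ℕ+, F w = ∑ i ∈ Finset.range (n-2),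
        (∏ j, fq q (w j)) * gN ((List.ofFn fun k => ((w k : ℕ))).getD i 0)
          ((List.ofFn fun k => ((w k : ℕ))).getD (i+1) 0)
          ((List.ofFn fun k => ((w k : ℕ))).getD (i+2) 0) := by
      intro w
      simp only [hF]
      rw [dsv_expand, hlen w, Finset.mul_sum]
    rw [tsum_congr hstep1, Summable.tsum_finsetSum (fun i _ => ENNReal.summable)]
    have hconst : ∀ i ∈ Finset.range (n-2),
        (∑' w : Fin n → ℕ+, (∏ j, fq q (w j)) * gN ((List.ofFn fun k => ((w k : ℕ))).getD i 0)
          ((List.ofFn fun k => ((w k : ℕ))).getD (i+1) 0)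
          ((List.ofFn fun k => ((w k : ℕ))).getD (i+2) 0))
        = ENNReal.ofReal ((1-q)^3 * q^2 * ((1-q^2)^2)⁻¹ * (1-q^3)⁻¹) := by
      intro i hi
      have hi2 : i < n - 2 := Finset.mem_range.mp hi
      have ha : i < n := by omega
      have hb : i + 1 < n := by omega
      have hc : i + 2 < n := by omega
      have hrw : ∀ w : Fin n → ℕ+,
          (∏ j, fq q (w j)) * gN ((List.ofFn fun k => ((w k : ℕ))).getD i 0)
            ((List.ofFn fun k => ((w k : ℕ))).getD (i+1) 0)
            ((List.ofFn fun k => ((w k : ℕ))).getD (i+2) 0)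
          = (∏ j, fq q (w j)) * gE (w ⟨i, ha⟩) (w ⟨i+1, hb⟩) (w ⟨i+2, hc⟩) := by
        intro w
        rw [getD_ofFn w i ha, getD_ofFn w (i+1) hb, getD_ofFn w (i+2) hc]
        rfl
      rw [tsum_congr hrw, marginal3 (fq q) (tsum_fq hq0 hq1) _ _ _
        (Fin.ne_of_val_ne (by simp only [Fin.val_mk]; omega))
        (Fin.ne_of_val_ne (by simp only [Fin.val_mk]; omega))
        (Fin.ne_of_val_ne (by simp only [Fin.val_mk]; omega)) gE, triple_eval hq0 hq1]
    rw [Finset.sum_congr rfl hconst, Finset.sum_const, Finset.card_range, nsmul_eq_mul]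
  have hfin : ∑' w, F w ≠ ⊤ := by
    rw [hsumF]
    exact ENNReal.mul_ne_top (ENNReal.natCast_ne_top _) ENNReal.ofReal_ne_top
  have htoReal : ∀ w : Fin n → ℕ+,
      wordP p q w * (dsvL (List.ofFn fun i => (w i : ℕ)) : ℝ) = (F w).toReal := by
    intro w
    rw [← hofReal w, ENNReal.toReal_ofReal (hA_nonneg w)]
  constructor
  · exact (ENNReal.summable_toReal hfin).congr fun w => (htoReal w).symm
  · rw [tsum_congr htoReal, ← ENNReal.tsum_toReal_eq
      (fun w => by rw [← hofReal w]; exact ENNReal.ofReal_ne_top), hsumF,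
      ENNReal.toReal_mul, ENNReal.toReal_natCast,
      ENNReal.toReal_ofReal (mul_nonneg (mul_nonneg (mul_nonneg
        (pow_nonneg (by linarith : (0:ℝ) ≤ 1 - q) 3) (by positivity))
        (inv_nonneg.mpr (by positivity))) (inv_nonneg.mpr (by nlinarith [pow_lt_one₀ hq0 hq1 (three_ne_zero)])))]
    have hcast : ((n - 2 : ℕ) : ℝ) = (n : ℝ) - 2 := by
      have := Nat.cast_sub (R := ℝ) hn
      simpa using this
    rw [hcast, hpq]
    have e2 : (0:ℝ) < 1 - q^2 := by nlinarith
    have e3 : (0:ℝ) < 1 - q^3 := by nlinarith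
    have e4 : (0:ℝ) < 1 + q := by linarith
    field_simp
    ring
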